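/- Let n ≥ 1, τ > 0, A, B, H(λ,K), L, and the closed-loop system be as in the context. If r(K) := max_{i=2,…,N} ρ(H(λ_i,K)) < 1, then for every initial state x(0), the consensus error e(k) := x(k) − (1/N)(𝟙_N 𝟙_N^T ⊗ A^k) x(0) converges to zero as k → ∞; in particular each agent's state x_i(k) satisfies x_i(k) − (1/N) A^k Σ_{p=1}^{N} x_p(0) → 0. -/

import Mathlib

open Matrix Kronecker Filter

/-- The n×n system matrix `A`: ones on the diagonal, `τ` on the superdiagonal. -/
noncomputable def Amat (n : ℕ) (τ : ℝ) : Matrix (Fin n) (Fin n) ℝ :=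
  Matrix.of fun i j => if (j : ℕ) = (i : ℕ) then 1 else if (j : ℕ) = (i : ℕ) + 1 then τ else 0

/-- The n×1 input matrix `B`: last entry `τ`, all other entries `0`. -/
noncomputable def Bmat (n : ℕ) (τ : ℝ) : Matrix (Fin n) (Fin 1) ℝ :=
  Matrix.of fun i _ => if (i : ℕ) = n - 1 then τ else 0

/-- `H(λ, K) = A - λ B K`. -/
noncomputable def Hmat (n : ℕ) (τ : ℝ) (lam : ℝ) (K : Matrix (Fin 1) (Fin n) ℝ) :
    Matrix (Fin n) (Fin n) ℝ :=
  Amat n τ - lam • (Bmat n τ * K)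

/-- Spectral radius of a real matrix: the largest modulus of its complex eigenvalues. -/
noncomputable def specRad {n : ℕ} (M : Matrix (Fin n) (Fin n) ℝ) : ℝ :=
  sSup ((fun z : ℂ => ‖z‖) '' spectrum ℂ (M.map (Complex.ofReal ·)))

section Analytic
open Topology
attribute [local instance] Matrix.linftyOpNormedRing Matrix.linftyOpNormedAlgebra
  Matrix.linftyOpNormedAddCommGroup

variable {m : ℕ}

lemma entry_nnnorm_le (A : Matrix (Fin m) (Fin m) ℂ) (i j : Fin m) : ‖A i j‖₊ ≤ ‖A‖₊ := by
  rw [Matrix.linfty_opNNNorm_def]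
  refine le_trans ?_ (Finset.le_sup (f := fun i => ∑ j : Fin m, ‖A i j‖₊) (Finset.mem_univ i))
  exact Finset.single_le_sum (f := fun j => ‖A i j‖₊) (fun j _ => zero_le) (Finset.mem_univ j)

lemma pow_entries_tendsto_zero (M : Matrix (Fin m) (Fin m) ℝ) (h : specRad M < 1)
    (i j : Fin m) : Tendsto (fun k : ℕ => (M ^ k) i j) atTop (𝓝 0) := by
  set Mc : Matrix (Fin m) (Fin m) ℂ := M.map (Complex.ofReal ·) with hMc
  have hmap : ∀ k : ℕ, Mc ^ k = (M ^ k).map (Complex.ofReal ·) := by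
    intro k
    have h0 : Mc = Complex.ofRealHom.mapMatrix M := rfl
    rw [h0, ← map_pow]; rfl
  have hbdd : BddAbove ((fun z : ℂ => ‖z‖) '' spectrum ℂ Mc) :=
    ((spectrum.isCompact Mc).image continuous_norm).bddAbove
  set c : ℝ := max (specRad M) 0 with hc
  have hc1 : c < 1 := by simp [hc, h]
  have hcnn : 0 ≤ c := le_max_right _ _
  have hspec : ∀ μ ∈ spectrum ℂ Mc, ‖μ‖₊ ≤ c.toNNReal := by
    intro μ hμ
    have h1 : ‖μ‖ ≤ specRad M := le_csSup hbdd ⟨μ, hμ, rfl⟩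
    have h2 : ‖μ‖ ≤ c := h1.trans (le_max_left _ _)
    rw [← NNReal.coe_le_coe, Real.coe_toNNReal _ hcnn]
    exact h2
  have hsr : spectralRadius ℂ Mc ≤ (c.toNNReal : ENNReal) := by
    rw [spectralRadius]
    exact iSup₂_le fun μ hμ => by exact_mod_cast hspec μ hμ
  have hct1 : c.toNNReal < 1 := by
    rw [← NNReal.coe_lt_coe, Real.coe_toNNReal _ hcnn]; exact hc1
  set r : NNReal := (c.toNNReal + 1) / 2 with hr
  have hcr : (c.toNNReal : ENNReal) < (r : ENNReal) := by
    rw [ENNReal.coe_lt_coe, hr, lt_div_iff₀ (by norm_num)]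
    calc c.toNNReal * 2 = c.toNNReal + c.toNNReal := by ring
      _ < c.toNNReal + 1 := add_lt_add_right hct1 _
  have hr1 : (r : ℝ) < 1 := by
    have h4 : (c.toNNReal : ℝ) < 1 := by exact_mod_cast hct1
    rw [hr]; push_cast; linarith
  have hgel := spectrum.pow_nnnorm_pow_one_div_tendsto_nhds_spectralRadius Mc
  have hev : ∀ᶠ k : ℕ in atTop, (‖Mc ^ k‖₊ : ENNReal) ^ (1 / (k:ℝ)) < (r : ENNReal) :=
    hgel.eventually_lt_const (lt_of_le_of_lt hsr hcr)
  have hev2 : ∀ᶠ k : ℕ in atTop, ‖Mc ^ k‖ ≤ (r : ℝ) ^ k := by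
    filter_upwards [hev, eventually_ge_atTop 1] with k hk hk1
    have hkne : (k : ℝ) ≠ 0 := by positivity
    have key : ((‖Mc ^ k‖₊ : ENNReal) ^ (1 / (k:ℝ))) ^ (k : ℝ) = (‖Mc ^ k‖₊ : ENNReal) := by
      rw [← ENNReal.rpow_mul, one_div, inv_mul_cancel₀ hkne, ENNReal.rpow_one]
    have h4 : (‖Mc ^ k‖₊ : ENNReal) < ((r : ENNReal)) ^ (k : ℝ) :=
      key ▸ ENNReal.rpow_lt_rpow hk (by positivity)
    have h5 : (‖Mc ^ k‖₊ : ENNReal) < ((r ^ k : NNReal) : ENNReal) := by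
      rwa [ENNReal.coe_pow, ← ENNReal.rpow_natCast (r : ENNReal) k]
    have h6 : ‖Mc ^ k‖₊ < r ^ k := ENNReal.coe_lt_coe.mp h5
    have := h6.le
    rw [← NNReal.coe_le_coe] at this
    simpa using this
  have habs : ∀ᶠ k : ℕ in atTop, |(M ^ k) i j| ≤ (r : ℝ) ^ k := by
    filter_upwards [hev2] with k hk
    have h7 : ‖(Mc ^ k) i j‖ ≤ ‖Mc ^ k‖ := by
      have := entry_nnnorm_le (Mc ^ k) i j
      rwa [← NNReal.coe_le_coe] at this
    have h8 : ‖(Mc ^ k) i j‖ = |(M ^ k) i j| := by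
      rw [hmap k]
      simp [Matrix.map_apply, Complex.norm_real]
    linarith
  have hlim : Tendsto (fun k : ℕ => (r : ℝ) ^ k) atTop (𝓝 0) :=
    tendsto_pow_atTop_nhds_zero_of_lt_one r.coe_nonneg hr1
  have habs' : Tendsto (fun k : ℕ => |(M ^ k) i j|) atTop (𝓝 0) :=
    squeeze_zero' (Eventually.of_forall fun k => abs_nonneg _) habs hlim
  exact tendsto_zero_iff_abs_tendsto_zero _ |>.mpr habs'

end Analytic

lemma pow_conj {ι : Type*} [Fintype ι] [DecidableEq ι] (P Q G : Matrix ι ι ℝ)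
    (hPQ : P * Q = 1) (hQP : Q * P = 1) (k : ℕ) : (P * G * Q) ^ k = P * G ^ k * Q := by
  induction k with
  | zero => simpa using hPQ.symm
  | succ k ih =>
      rw [pow_succ, ih, pow_succ]
      have h1 : P * G ^ k * Q * (P * G * Q) = P * G ^ k * ((Q * P) * (G * Q)) := by
        simp only [Matrix.mul_assoc]
      rw [h1, hQP, Matrix.one_mul]
      simp only [Matrix.mul_assoc]

lemma blockPow {N n : ℕ} (H : Fin N → Matrix (Fin n) (Fin n) ℝ)
    (G : Matrix (Fin N × Fin n) (Fin N × Fin n) ℝ)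
    (hG : ∀ p c q d, G (p, c) (q, d) = if p = q then H p c d else 0) (k : ℕ) :
    ∀ p c q d, (G ^ k) (p, c) (q, d) = if p = q then (H p ^ k) c d else 0 := by
  induction k with
  | zero =>
      intro p c q d
      simp [Matrix.one_apply, Prod.ext_iff]
      split_ifs <;> simp_all
  | succ k ih =>
      intro p c q d
      rw [pow_succ, Matrix.mul_apply, Fintype.sum_prod_type]
      simp only [ih, hG]
      by_cases hpq : p = q
      · subst hpq
        rw [pow_succ, Matrix.mul_apply]
        rw [Finset.sum_eq_single p]
        · simp [Finset.mul_sum]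
        · intro b _ hb; simp [hb, Ne.symm hb]
        · simp
      · simp only [if_neg hpq]
        rw [Finset.sum_eq_zero]
        intro b _
        by_cases h1 : p = b <;> by_cases h2 : b = q <;> simp_all

lemma conj_sub {N n : ℕ} (V W D : Matrix (Fin N) (Fin N) ℝ) (A C : Matrix (Fin n) (Fin n) ℝ)
    (hVW : V * W = 1) :
    (V ⊗ₖ (1 : Matrix (Fin n) (Fin n) ℝ)) * ((1 : Matrix (Fin N) (Fin N) ℝ) ⊗ₖ A - D ⊗ₖ C) *
      (W ⊗ₖ 1) = (1 : Matrix (Fin N) (Fin N) ℝ) ⊗ₖ A - (V * D * W) ⊗ₖ C := by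
  rw [Matrix.mul_sub, Matrix.sub_mul]
  rw [← Matrix.mul_kronecker_mul, ← Matrix.mul_kronecker_mul,
      ← Matrix.mul_kronecker_mul, ← Matrix.mul_kronecker_mul]
  simp [hVW, Matrix.mul_one, Matrix.one_mul]

lemma ones_split {N n : ℕ} (V : Matrix (Fin N) (Fin N) ℝ) (Ak : Matrix (Fin n) (Fin n) ℝ)
    (z : Fin N) (hVz : ∀ i j, V i z * V j z = (N : ℝ)⁻¹) :
    (N : ℝ)⁻¹ • ((Matrix.of fun _ _ => (1:ℝ)) ⊗ₖ Ak)
      = (V ⊗ₖ (1 : Matrix (Fin n) (Fin n) ℝ)) *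
        (Matrix.of fun (pc : Fin N × Fin n) (qd : Fin N × Fin n) =>
          if pc.1 = z ∧ qd.1 = z then Ak pc.2 qd.2 else 0) * (Vᵀ ⊗ₖ 1) := by
  ext ⟨i, a⟩ ⟨j, b⟩
  simp only [Matrix.mul_apply, Fintype.sum_prod_type, Matrix.kroneckerMap_apply,
    Matrix.one_apply, Matrix.of_apply, Matrix.transpose_apply, Matrix.smul_apply, smul_eq_mul,
    mul_ite, ite_mul, mul_zero, zero_mul, mul_one, one_mul, ite_and,
    Finset.sum_ite_eq, Finset.sum_ite_eq', Finset.mem_univ, if_true, Finset.sum_ite_irrel,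
    Finset.sum_const_zero]
  rw [← hVz i j]
  ring

lemma Vz_const {N : ℕ} (hN : 2 ≤ N) (V : Matrix (Fin N) (Fin N) ℝ) (lam : Fin N → ℝ)
    (z : Fin N) (hlampos : ∀ i : Fin N, i ≠ z → 0 < lam i)
    (hV : Vᵀ * V = 1) (hVV : V * Vᵀ = 1)
    (hL1 : (V * Matrix.diagonal lam * Vᵀ) *ᵥ (fun _ => (1:ℝ)) = 0) :
    ∀ i j, V i z * V j z = (N : ℝ)⁻¹ := by
  set w : Fin N → ℝ := Vᵀ *ᵥ (fun _ => (1:ℝ)) with hw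
  have hDw : Matrix.diagonal lam *ᵥ w = 0 := by
    have h1 : Vᵀ *ᵥ ((V * Matrix.diagonal lam * Vᵀ) *ᵥ (fun _ => (1:ℝ))) = 0 := by
      rw [hL1]; simp
    rw [Matrix.mulVec_mulVec, ← Matrix.mul_assoc, ← Matrix.mul_assoc, hV, Matrix.one_mul,
      ← Matrix.mulVec_mulVec] at h1
    exact h1
  have hw0 : ∀ i, i ≠ z → w i = 0 := by
    intro i hi
    have h2 := congrFun hDw i
    rw [Matrix.mulVec_diagonal] at h2
    rcases mul_eq_zero.mp h2 with h | h
    · exact absurd h (hlampos i hi).ne'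
    · exact h
  have hone : V *ᵥ w = fun _ => (1:ℝ) := by
    rw [hw, Matrix.mulVec_mulVec, hVV, Matrix.one_mulVec]
  have hentry : ∀ i, V i z * w z = 1 := by
    intro i
    have h3 := congrFun hone i
    rw [Matrix.mulVec, dotProduct] at h3
    rw [Finset.sum_eq_single z] at h3
    · exact h3
    · intro b _ hb; rw [hw0 b hb, mul_zero]
    · simp
  have hNw : w z * w z = (N : ℝ) := by
    have h4 : w ⬝ᵥ w = (N : ℝ) := by
      calc w ⬝ᵥ w = w ⬝ᵥ (Vᵀ *ᵥ (fun _ => (1:ℝ))) := by rw [← hw]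
        _ = (w ᵥ* Vᵀ) ⬝ᵥ (fun _ => (1:ℝ)) := by rw [Matrix.dotProduct_mulVec]
        _ = (V *ᵥ w) ⬝ᵥ (fun _ => (1:ℝ)) := by rw [Matrix.vecMul_transpose]
        _ = (N : ℝ) := by rw [hone]; simp [dotProduct]
    rw [dotProduct, Finset.sum_eq_single z] at h4
    · exact h4
    · intro b _ hb; rw [hw0 b hb, mul_zero]
    · simp
  intro i j
  have hNne : (N : ℝ) ≠ 0 := by positivity
  have h5 : (V i z * V j z) * (N : ℝ) = 1 := by
    rw [← hNw]
    calc V i z * V j z * (w z * w z) = (V i z * w z) * (V j z * w z) := by ring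
      _ = 1 := by rw [hentry i, hentry j, mul_one]
  field_simp at h5 ⊢
  linarith

/-- if `r(K) = max_{i ≥ 2} ρ(H(λ_i,K)) < 1`, then for every initial state the
consensus error `e(k) = x(k) − (1/N)(𝟙𝟙ᵀ ⊗ A^k) x(0)` converges to zero; in particular every
agent's state satisfies `x_i(k) − (1/N) A^k ∑_p x_p(0) → 0`. -/
theorem stmt_4 (n : ℕ) (hn : 1 ≤ n) (τ : ℝ) (hτ : 0 < τ)
    (N : ℕ) (hN : 2 ≤ N) (L : Matrix (Fin N) (Fin N) ℝ)
    (lam : Fin N → ℝ) (hmono : Monotone lam) (hlam0 : lam ⟨0, by omega⟩ = 0)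
    (hlampos : ∀ i : Fin N, i ≠ ⟨0, by omega⟩ → 0 < lam i)
    (hL1 : L *ᵥ (fun _ => (1 : ℝ)) = 0)
    (hdiag : ∃ V : Matrix (Fin N) (Fin N) ℝ, Vᵀ * V = 1 ∧ L = V * Matrix.diagonal lam * Vᵀ)
    (K : Matrix (Fin 1) (Fin n) ℝ)
    (hr : ∀ i : Fin N, i ≠ ⟨0, by omega⟩ → specRad (Hmat n τ (lam i) K) < 1) :
    ∀ x0 : Fin N × Fin n → ℝ,
      Tendsto (fun k : ℕ =>
          (((1 : Matrix (Fin N) (Fin N) ℝ) ⊗ₖ Amat n τ - L ⊗ₖ (Bmat n τ * K)) ^ k) *ᵥ x0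
          - ((N : ℝ)⁻¹ • ((Matrix.of fun _ _ => (1 : ℝ)) ⊗ₖ (Amat n τ ^ k))) *ᵥ x0)
        atTop (nhds 0)
      ∧ ∀ i : Fin N, ∀ l : Fin n,
          Tendsto (fun k : ℕ =>
              ((((1 : Matrix (Fin N) (Fin N) ℝ) ⊗ₖ Amat n τ - L ⊗ₖ (Bmat n τ * K)) ^ k) *ᵥ x0) (i, l)
              - (N : ℝ)⁻¹ * ((Amat n τ ^ k) *ᵥ (fun m => ∑ p : Fin N, x0 (p, m))) l)
            atTop (nhds 0) := by
  intro x0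
  obtain ⟨V, hV, hLdiag⟩ := hdiag
  have hVV : V * Vᵀ = 1 := mul_eq_one_comm.mp hV
  set z : Fin N := ⟨0, by omega⟩ with hz
  set J : Matrix (Fin N) (Fin N) ℝ := Matrix.of fun _ _ => (1 : ℝ) with hJ
  set A : Matrix (Fin n) (Fin n) ℝ := Amat n τ with hA
  set C : Matrix (Fin n) (Fin n) ℝ := Bmat n τ * K with hC
  set M : Matrix (Fin N × Fin n) (Fin N × Fin n) ℝ :=
    (1 : Matrix (Fin N) (Fin N) ℝ) ⊗ₖ A - L ⊗ₖ C with hM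
  set G : Matrix (Fin N × Fin n) (Fin N × Fin n) ℝ :=
    (1 : Matrix (Fin N) (Fin N) ℝ) ⊗ₖ A - (Matrix.diagonal lam) ⊗ₖ C with hG
  set H : Fin N → Matrix (Fin n) (Fin n) ℝ := fun i => Hmat n τ (lam i) K with hH
  -- Kronecker conjugation matrices
  have hPQ : (V ⊗ₖ (1 : Matrix (Fin n) (Fin n) ℝ)) * (Vᵀ ⊗ₖ 1) = 1 := by
    rw [← Matrix.mul_kronecker_mul, hVV, Matrix.one_mul, Matrix.one_kronecker_one]
  have hQP : (Vᵀ ⊗ₖ (1 : Matrix (Fin n) (Fin n) ℝ)) * (V ⊗ₖ 1) = 1 := by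
    rw [← Matrix.mul_kronecker_mul, hV, Matrix.one_mul, Matrix.one_kronecker_one]
  have hconj : M = (V ⊗ₖ (1 : Matrix (Fin n) (Fin n) ℝ)) * G * (Vᵀ ⊗ₖ 1) := by
    rw [hM, hG, conj_sub V Vᵀ (Matrix.diagonal lam) A C hVV, ← hLdiag]
  have hMk : ∀ k : ℕ, M ^ k = (V ⊗ₖ (1 : Matrix (Fin n) (Fin n) ℝ)) * G ^ k * (Vᵀ ⊗ₖ 1) := by
    intro k; rw [hconj, pow_conj _ _ _ hPQ hQP]
  -- entries of G
  have hGent : ∀ p c q d, G (p, c) (q, d) = if p = q then H p c d else 0 := by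
    intro p c q d
    rw [hG]
    simp only [Matrix.sub_apply, Matrix.kroneckerMap_apply, Matrix.one_apply,
      Matrix.diagonal_apply, hH, Hmat, ← hA, ← hC]
    split_ifs <;> simp
  have hGk := blockPow H G hGent
  -- eigenvector facts
  have hVz : ∀ i j, V i z * V j z = (N : ℝ)⁻¹ :=
    Vz_const hN V lam z hlampos hV hVV (by rw [← hLdiag]; exact hL1)
  -- the middle difference matrix
  set Ek : ℕ → Matrix (Fin N × Fin n) (Fin N × Fin n) ℝ := fun k =>
    Matrix.of fun pc qd => if pc.1 = z ∧ qd.1 = z then (A ^ k) pc.2 qd.2 else 0 with hEk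
  have hsplit : ∀ k : ℕ, (N : ℝ)⁻¹ • (J ⊗ₖ (A ^ k))
      = (V ⊗ₖ (1 : Matrix (Fin n) (Fin n) ℝ)) * Ek k * (Vᵀ ⊗ₖ 1) := fun k =>
    ones_split V (A ^ k) z hVz
  have hHz : H z = A := by
    simp only [hH, Hmat, hlam0, zero_smul, sub_zero, ← hA]
  have hmid : ∀ k p c q d, (G ^ k - Ek k) (p, c) (q, d)
      = if p = q ∧ p ≠ z then ((H p) ^ k) c d else 0 := by
    intro k p c q d
    rw [Matrix.sub_apply, hGk k, hEk]
    simp only [Matrix.of_apply]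
    by_cases hpq : p = q
    · subst hpq
      by_cases hpz : p = z
      · subst hpz
        simp [hHz]
      · simp [hpz]
    · have : ¬(p = z ∧ q = z) := fun ⟨h1, h2⟩ => hpq (h1.trans h2.symm)
      simp [hpq, this]
  -- convergence of the middle matrix entries
  have hmidtend : ∀ pc qd : Fin N × Fin n,
      Tendsto (fun k : ℕ => (G ^ k - Ek k) pc qd) atTop (nhds 0) := by
    rintro ⟨p, c⟩ ⟨q, d⟩
    simp only [hmid]
    by_cases hcond : p = q ∧ p ≠ z
    · simp only [if_pos hcond]
      exact pow_entries_tendsto_zero (H p) (hr p hcond.2) c d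
    · simp only [if_neg hcond]
      exact tendsto_const_nhds
  -- convergence of the error matrix entries
  have hErr : ∀ u v : Fin N × Fin n,
      Tendsto (fun k : ℕ => (M ^ k - (N : ℝ)⁻¹ • (J ⊗ₖ (A ^ k))) u v)
        atTop (nhds 0) := by
    intro u v
    have heq : ∀ k : ℕ, (M ^ k - (N : ℝ)⁻¹ • (J ⊗ₖ (A ^ k))) u v
        = ∑ w : Fin N × Fin n, ∑ t : Fin N × Fin n,
            (V ⊗ₖ (1 : Matrix (Fin n) (Fin n) ℝ)) u t * (G ^ k - Ek k) t w * (Vᵀ ⊗ₖ 1) w v := by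
      intro k
      rw [hMk k, hsplit k, ← Matrix.sub_mul, ← Matrix.mul_sub]
      rw [Matrix.mul_apply]
      congr 1
      funext w
      rw [Matrix.mul_apply, Finset.sum_mul]
    simp only [heq]
    have h0 : (0 : ℝ) = ∑ w : Fin N × Fin n, ∑ t : Fin N × Fin n, (0 : ℝ) := by simp
    rw [h0]
    refine tendsto_finset_sum _ fun w _ => tendsto_finset_sum _ fun t _ => ?_
    simpa using ((hmidtend t w).const_mul ((V ⊗ₖ (1 : Matrix (Fin n) (Fin n) ℝ)) u t)).mul_const
      ((Vᵀ ⊗ₖ (1 : Matrix (Fin n) (Fin n) ℝ)) w v)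
  -- convergence of the error vector
  have hvec : ∀ u : Fin N × Fin n,
      Tendsto (fun k : ℕ => ((M ^ k) *ᵥ x0
        - ((N : ℝ)⁻¹ • (J ⊗ₖ (A ^ k))) *ᵥ x0) u) atTop (nhds 0) := by
    intro u
    have heq : ∀ k : ℕ, ((M ^ k) *ᵥ x0
        - ((N : ℝ)⁻¹ • (J ⊗ₖ (A ^ k))) *ᵥ x0) u
        = ∑ v : Fin N × Fin n,
            (M ^ k - (N : ℝ)⁻¹ • (J ⊗ₖ (A ^ k))) u v * x0 v := by
      intro k
      rw [← Matrix.sub_mulVec]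
      simp [Matrix.mulVec, dotProduct]
    simp only [heq]
    have h0 : (0 : ℝ) = ∑ v : Fin N × Fin n, (0 : ℝ) := by simp
    rw [h0]
    exact tendsto_finset_sum _ fun v _ => by simpa using (hErr u v).mul_const (x0 v)
  constructor
  · rw [tendsto_pi_nhds]
    intro u
    simpa using hvec u
  · intro i l
    have heq2 : ∀ k : ℕ, (((N : ℝ)⁻¹ • (J ⊗ₖ (A ^ k))) *ᵥ x0) (i, l)
        = (N : ℝ)⁻¹ * ((A ^ k) *ᵥ (fun m => ∑ p : Fin N, x0 (p, m))) l := by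
      intro k
      simp only [Matrix.mulVec, dotProduct, Matrix.smul_apply, Matrix.kroneckerMap_apply,
        hJ, Matrix.of_apply, smul_eq_mul, one_mul]
      rw [Fintype.sum_prod_type, Finset.sum_comm, Finset.mul_sum]
      refine Finset.sum_congr rfl fun m _ => ?_
      rw [Finset.mul_sum, Finset.mul_sum]
      refine Finset.sum_congr rfl fun p _ => ?_
      ring
    have := hvec (i, l)
    simp only [Pi.sub_apply] at this
    simp only [← heq2]
    exact this
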